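/- Consider a short exact sequence of groups 1 → N → G → Q → 1. If Q is balanced and N satisfies Condition MAX (every infinite cyclic subgroup of N is contained in a unique maximal virtually cyclic subgroup of N), then G is balanced. -/

import Mathlib

open Subgroup

def IsBalanced (G : Type*) [Group G] : Prop :=
  ∀ g h : G, ¬ IsOfFinOrder h → ∀ k l : ℤ, k ≠ 0 → l ≠ 0 →
    g * h ^ k * g⁻¹ = h ^ l → |k| = |l|

def IsVirtuallyCyclic (G : Type*) [Group G] : Prop :=
  ∃ H : Subgroup G, IsCyclic H ∧ H.FiniteIndex

def ConditionMAX (G : Type*) [Group G] : Prop :=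
  ∀ h : G, ¬ IsOfFinOrder h →
    ∃! M : Subgroup G, IsVirtuallyCyclic M ∧ Subgroup.zpowers h ≤ M ∧
      ∀ M' : Subgroup G, IsVirtuallyCyclic M' → M ≤ M' → M = M'

lemma aux_toSubgroup_zmultiples (t : ℤ) :
    AddSubgroup.toSubgroup (AddSubgroup.zmultiples t) = zpowers (Multiplicative.ofAdd t) := by
  ext y
  show Multiplicative.toAdd y ∈ AddSubgroup.zmultiples t ↔ _
  rw [AddSubgroup.mem_zmultiples_iff, mem_zpowers_iff]
  constructor
  · rintro ⟨k, hk⟩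
    exact ⟨k, by rw [← ofAdd_zsmul, hk]; simp⟩
  · rintro ⟨k, hk⟩
    refine ⟨k, ?_⟩
    rw [← ofAdd_zsmul] at hk
    simpa [mul_comm] using congrArg Multiplicative.toAdd hk

lemma aux_index_zpowers_ofAdd (t : ℤ) :
    (Subgroup.zpowers (Multiplicative.ofAdd t)).index = t.natAbs := by
  rw [← Int.index_zmultiples t, ← AddSubgroup.index_toSubgroup, aux_toSubgroup_zmultiples]

lemma aux_relindex_zpowers {G : Type*} [Group G] (x : G) (hx : ¬ IsOfFinOrder x) (t : ℤ) :
    (zpowers (x ^ t)).relIndex (zpowers x) = t.natAbs := by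
  have hinj : Function.Injective (fun n : ℤ => x ^ n) :=
    injective_zpow_iff_not_isOfFinOrder.2 hx
  set f : Multiplicative ℤ →* G := zpowersHom G x with hf
  have hfn : ∀ n : Multiplicative ℤ, f n = x ^ n.toAdd := fun n => rfl
  have hcomap : (zpowers (x ^ t)).comap f = zpowers (Multiplicative.ofAdd t) := by
    ext n
    simp only [mem_comap, mem_zpowers_iff, hfn]
    constructor
    · rintro ⟨j, hj⟩
      refine ⟨j, ?_⟩
      have h2 : x ^ (t * j) = x ^ (n.toAdd) := by rw [zpow_mul]; exact hj
      have h3 := hinj h2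
      rw [← ofAdd_zsmul, smul_eq_mul, mul_comm, h3]
      simp
    · rintro ⟨j, hj⟩
      refine ⟨j, ?_⟩
      rw [← ofAdd_zsmul, smul_eq_mul] at hj
      have h3 : n.toAdd = j * t := by simpa [mul_comm] using congrArg Multiplicative.toAdd hj.symm
      rw [h3, mul_comm, zpow_mul]
  have h1 := Subgroup.relIndex_comap (H := zpowers (x ^ t)) f (⊤ : Subgroup (Multiplicative ℤ))
  rw [hcomap, relIndex_top_right] at h1
  have h2 : Subgroup.map f ⊤ = zpowers x := by
    rw [← MonoidHom.range_eq_map]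
    exact Subgroup.range_zpowersHom x
  rw [h2] at h1
  rw [← h1, aux_index_zpowers_ofAdd]

lemma aux_vc_of_mulEquiv {G₁ G₂ : Type*} [Group G₁] [Group G₂] (e : G₁ ≃* G₂)
    (h : IsVirtuallyCyclic G₁) : IsVirtuallyCyclic G₂ := by
  obtain ⟨H, hc, hf⟩ := h
  refine ⟨H.map e.toMonoidHom, ?_, ?_⟩
  · have : IsCyclic ↥H := hc
    exact isCyclic_of_surjective (e.subgroupMap H).toMonoidHom (e.subgroupMap H).surjective
  · refine ⟨?_⟩
    rw [map_equiv_eq_comap_symm', index_comap_of_surjective _ e.symm.surjective]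
    exact hf.index_ne_zero

lemma aux_zpowers_index_ne_zero {M : Type*} [Group M] (hvc : IsVirtuallyCyclic M) {x : M}
    (hx : ¬ IsOfFinOrder x) : (zpowers x).index ≠ 0 := by
  obtain ⟨H, hc, hf⟩ := hvc
  obtain ⟨c, hcgen⟩ := hc.exists_generator
  have hH : H = zpowers (c : M) := by
    apply le_antisymm
    · intro y hy
      obtain ⟨j, hj⟩ := mem_zpowers_iff.mp (hcgen ⟨y, hy⟩)
      exact mem_zpowers_iff.mpr ⟨j, by rw [← Subgroup.coe_zpow, hj]⟩
    · rw [zpowers_le]; exact c.2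
  obtain ⟨n, hn0, _, hmem⟩ := Subgroup.exists_pow_mem_of_index_ne_zero hf.index_ne_zero x
  rw [hH] at hmem
  obtain ⟨t, ht⟩ := mem_zpowers_iff.mp hmem
  have hxn : ¬ IsOfFinOrder (x ^ n) := fun hfin => hx (hfin.of_pow hn0.ne')
  have ht0 : t ≠ 0 := by
    rintro rfl
    rw [zpow_zero] at ht
    exact hxn (ht ▸ IsOfFinOrder.one)
  have hc0 : ¬ IsOfFinOrder (c : M) := fun hfin => hxn (ht ▸ hfin.zpow)
  have hle : zpowers ((c : M) ^ t) ≤ zpowers x := by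
    rw [zpowers_le]
    exact ht ▸ mem_zpowers_iff.mpr ⟨(n : ℤ), by rw [zpow_natCast]⟩
  have hidx : (zpowers ((c : M) ^ t)).index = t.natAbs * H.index := by
    rw [← relIndex_mul_index
      (show zpowers ((c : M) ^ t) ≤ zpowers (c : M) by rw [zpowers_le]; exact ⟨t, rfl⟩),
      aux_relindex_zpowers _ hc0]
    congr 1
    rw [← hH]
  intro h0
  have hdvd := Subgroup.index_dvd_of_le hle
  rw [h0, hidx] at hdvd
  rcases Nat.mul_eq_zero.mp (Nat.eq_zero_of_zero_dvd hdvd) with h | h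
  · exact Int.natAbs_ne_zero.mpr ht0 h
  · exact hf.index_ne_zero h

lemma aux_zpowers_relindex_ne_zero {Γ : Type*} [Group Γ] {L : Subgroup Γ}
    (hvc : IsVirtuallyCyclic L) {x : Γ} (hx : x ∈ L) (hord : ¬ IsOfFinOrder x) :
    (zpowers x).relIndex L ≠ 0 := by
  have hkey : (zpowers x).subgroupOf L = zpowers (⟨x, hx⟩ : L) := by
    ext y
    rw [mem_subgroupOf, mem_zpowers_iff, mem_zpowers_iff]
    constructor
    · rintro ⟨k, hk⟩
      exact ⟨k, by ext; rw [Subgroup.coe_zpow]; exact hk⟩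
    · rintro ⟨k, hk⟩
      exact ⟨k, by rw [← hk, Subgroup.coe_zpow]⟩
  have hord' : ¬ IsOfFinOrder (⟨x, hx⟩ : L) := by
    rw [← orderOf_eq_zero_iff] at hord ⊢
    rwa [Subgroup.orderOf_mk]
  rw [Subgroup.relIndex, hkey]
  exact aux_zpowers_index_ne_zero hvc hord'

lemma aux_not_isOfFinOrder_zpow {M : Type*} [Group M] {x : M} (hx : ¬ IsOfFinOrder x)
    {k : ℤ} (hk : k ≠ 0) : ¬ IsOfFinOrder (x ^ k) := by
  intro hfin
  apply hx
  have h1 : IsOfFinOrder (x ^ k.natAbs) := by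
    rcases Int.natAbs_eq k with he | he
    · rw [← zpow_natCast, ← he]; exact hfin
    · rw [← zpow_natCast, ← isOfFinOrder_inv_iff, ← zpow_neg, ← he]; exact hfin
  exact h1.of_pow (Int.natAbs_ne_zero.mpr hk)

lemma aux_relindex_map {G G' : Type*} [Group G] [Group G'] (e : G ≃* G') (H K : Subgroup G) :
    (H.map e.toMonoidHom).relIndex (K.map e.toMonoidHom) = H.relIndex K := by
  have hKK : (K.map e.toMonoidHom).map e.symm.toMonoidHom = K := by
    rw [map_map]
    have h1 : e.symm.toMonoidHom.comp e.toMonoidHom = MonoidHom.id G :=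
      MonoidHom.ext fun x => e.symm_apply_apply x
    rw [h1, map_id]
  rw [map_equiv_eq_comap_symm', Subgroup.relIndex_comap, hKK]

theorem balanced_of_ses_conditionMAX {G Q : Type*} [Group G] [Group Q]
    (p : G →* Q) (hp : Function.Surjective p)
    (hQ : IsBalanced Q) (hN : ConditionMAX p.ker) : IsBalanced G := by
  intro g h hord k l hk hl hconj
  by_cases hq : IsOfFinOrder (p h)
  swap
  · refine hQ (p g) (p h) hq k l hk hl ?_
    simpa [map_mul, map_zpow] using congrArg p hconj
  set m : ℕ := orderOf (p h) with hm
  have hm0 : m ≠ 0 := hq.orderOf_pos.ne'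
  set a : G := h ^ m with ha
  have haker : a ∈ p.ker := by
    rw [MonoidHom.mem_ker, ha, map_pow, pow_orderOf_eq_one]
  have haord : ¬ IsOfFinOrder a := fun hf => hord (hf.of_pow hm0)
  -- the conjugation identity for a
  have hpowk : a ^ k = (h ^ k) ^ (m : ℤ) := by
    rw [ha, ← zpow_natCast h m, ← zpow_mul, ← zpow_mul, mul_comm]
  have hpowl : a ^ l = (h ^ l) ^ (m : ℤ) := by
    rw [ha, ← zpow_natCast h m, ← zpow_mul, ← zpow_mul, mul_comm]
  have hconjk : g * a ^ k * g⁻¹ = a ^ l := by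
    have h1 : g * a ^ k * g⁻¹ = (MulAut.conj g) (a ^ k) := by simp [MulAut.conj_apply]
    rw [h1, hpowk, map_zpow]
    have h2 : (MulAut.conj g) (h ^ k) = h ^ l := by
      simpa [MulAut.conj_apply] using hconj
    rw [h2, ← hpowl]
  -- move into the kernel
  set a' : p.ker := ⟨a, haker⟩ with ha'
  have ha'ord : ¬ IsOfFinOrder a' := by
    rw [← orderOf_eq_zero_iff] at haord ⊢
    rwa [Subgroup.orderOf_mk]
  set φ : MulAut p.ker := MulAut.conjNormal g with hφdef
  have hφcoe : ∀ x : p.ker, ((φ x : p.ker) : G) = g * x * g⁻¹ :=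
    fun x => MulAut.conjNormal_apply g x
  have hφk : φ (a' ^ k) = a' ^ l := by
    ext
    rw [hφcoe, Subgroup.coe_zpow, Subgroup.coe_zpow]
    exact hconjk
  obtain ⟨M, ⟨hMvc, hMa, hMmax⟩, -⟩ := hN a' ha'ord
  have haM : a' ∈ M := hMa (Subgroup.mem_zpowers a')
  obtain ⟨Ml, hMlprop, hMluniq⟩ := hN (a' ^ l) (aux_not_isOfFinOrder_zpow ha'ord hl)
  have hMMl : M = Ml := hMluniq M ⟨hMvc, zpowers_le.mpr (M.zpow_mem haM l), hMmax⟩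
  -- the image of M under φ
  set Mφ : Subgroup p.ker := M.map φ.toMonoidHom with hMφdef
  have hMφvc : IsVirtuallyCyclic Mφ := aux_vc_of_mulEquiv (φ.subgroupMap M) hMvc
  have hMφl : zpowers (a' ^ l) ≤ Mφ :=
    zpowers_le.mpr ⟨a' ^ k, M.zpow_mem haM k, hφk⟩
  have hMφmax : ∀ M' : Subgroup p.ker, IsVirtuallyCyclic M' → Mφ ≤ M' → Mφ = M' := by
    intro M' hvc' hle
    have h1 : M ≤ M'.comap φ.toMonoidHom := map_le_iff_le_comap.mp hle
    have h2 : IsVirtuallyCyclic (M'.comap φ.toMonoidHom) := by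
      have hceq : M'.comap φ.toMonoidHom = M'.map φ.symm.toMonoidHom := by
        rw [map_equiv_eq_comap_symm']
        simp
      rw [hceq]
      exact aux_vc_of_mulEquiv (φ.symm.subgroupMap M') hvc'
    have h3 := hMmax _ h2 h1
    rw [hMφdef, h3, map_comap_eq_self_of_surjective (f := φ.toMonoidHom) φ.surjective]
  have hMφM : Mφ = M := by
    rw [hMluniq Mφ ⟨hMφvc, hMφl, hMφmax⟩, ← hMMl]
  -- push down to G
  set MG : Subgroup G := M.map p.ker.subtype with hMGdef
  have haMG : a ∈ MG := ⟨a', haM, rfl⟩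
  have hvcMG : IsVirtuallyCyclic MG := by
    have e := M.equivMapOfInjective p.ker.subtype p.ker.subtype_injective
    exact aux_vc_of_mulEquiv e hMvc
  have hcomm : (MulAut.conj g).toMonoidHom.comp p.ker.subtype
      = p.ker.subtype.comp φ.toMonoidHom := by
    ext x
    simp only [MonoidHom.comp_apply, Subgroup.coe_subtype, MulAut.conj_apply]
    exact (hφcoe x).symm
  have hconjMG : MG.map (MulAut.conj g).toMonoidHom = MG := by
    rw [hMGdef, map_map, hcomm, ← map_map, ← hMφdef, hMφM]
  -- index computations
  have hle_a : zpowers a ≤ MG := zpowers_le.mpr haMG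
  have hr : (zpowers a).relIndex MG ≠ 0 := aux_zpowers_relindex_ne_zero hvcMG haMG haord
  have hkrel : (zpowers (a ^ k)).relIndex MG = k.natAbs * (zpowers a).relIndex MG := by
    rw [← relIndex_mul_relIndex (zpowers (a ^ k)) (zpowers a) MG
      (zpowers_le.mpr ⟨k, rfl⟩) hle_a, aux_relindex_zpowers a haord k]
  have hlrel : (zpowers (a ^ l)).relIndex MG = l.natAbs * (zpowers a).relIndex MG := by
    rw [← relIndex_mul_relIndex (zpowers (a ^ l)) (zpowers a) MG
      (zpowers_le.mpr ⟨l, rfl⟩) hle_a, aux_relindex_zpowers a haord l]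
  have hmapz : (zpowers (a ^ k)).map (MulAut.conj g).toMonoidHom = zpowers (a ^ l) := by
    rw [MonoidHom.map_zpowers]
    have hco : (MulAut.conj g).toMonoidHom (a ^ k) = a ^ l := by
      simpa [MulAut.conj_apply] using hconjk
    rw [hco]
  have hrel_eq : (zpowers (a ^ k)).relIndex MG = (zpowers (a ^ l)).relIndex MG := by
    conv_rhs => rw [← hmapz, ← hconjMG]
    rw [aux_relindex_map]
  rw [hkrel, hlrel] at hrel_eq
  have habs : k.natAbs = l.natAbs :=
    Nat.eq_of_mul_eq_mul_right (Nat.pos_of_ne_zero hr) hrel_eq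
  rw [Int.abs_eq_natAbs, Int.abs_eq_natAbs, habs]
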